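/- Let χ_δ be the indicator function of {θ ∈ ℝ : ‖θ‖ ≤ δ} with δ = 1/T for T ≥ 2, and let D = ⌊T/2⌋. Then χ_δ(θ) ≤ (π^2/4) ∑_{|d| ≤ D} ((D − |d|)/D^2) e(dθ) for all θ ∈ ℝ. -/

import Mathlib

open Finset Complex

lemma norm_exp_mul_I_sub_one (t : ℝ) :
    ‖Complex.exp ((t : ℂ) * Complex.I) - 1‖ = 2 * |Real.sin (t / 2)| := by
  rw [Complex.exp_mul_I]
  have h1 : Complex.cos (t : ℂ) + Complex.sin (t : ℂ) * Complex.I - 1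
      = Complex.mk (Real.cos t - 1) (Real.sin t) := by
    apply Complex.ext <;>
      simp [Complex.cos_ofReal_re, Complex.sin_ofReal_re, Complex.cos_ofReal_im,
        Complex.sin_ofReal_im]
  rw [h1, Complex.norm_def, Complex.normSq_mk]
  have h2 : (Real.cos t - 1) * (Real.cos t - 1) + Real.sin t * Real.sin t
      = (2 * |Real.sin (t / 2)|)^2 := by
    have hc : Real.cos t = 2 * Real.cos (t / 2) ^ 2 - 1 := by
      rw [← Real.cos_two_mul]; ring_nf
    have hs : Real.sin (t / 2) ^ 2 + Real.cos (t / 2) ^ 2 = 1 := Real.sin_sq_add_cos_sq _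
    have hs2 : Real.sin t ^ 2 + Real.cos t ^ 2 = 1 := Real.sin_sq_add_cos_sq _
    have habs2 : |Real.sin (t / 2)| ^ 2 = Real.sin (t / 2) ^ 2 := sq_abs _
    nlinarith [hs, hs2, hc, habs2]
  rw [h2, Real.sqrt_sq (by positivity)]

lemma fejer_card (D : ℕ) (d : ℤ) (hd : d ∈ Finset.Icc (-(D:ℤ)) (D:ℤ)) :
    ((((Finset.range D).filter (fun j : ℕ => 0 ≤ (j:ℤ) - d ∧ (j:ℤ) - d < D)).card : ℤ))
      = (D:ℤ) - |d| := by
  simp only [Finset.mem_Icc] at hd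
  have hfil : ((Finset.range D).filter (fun j : ℕ => 0 ≤ (j:ℤ) - d ∧ (j:ℤ) - d < D))
      = Finset.Ico d.toNat (D - (-d).toNat) := by
    ext j
    simp only [Finset.mem_filter, Finset.mem_range, Finset.mem_Ico]
    omega
  rw [hfil, Nat.card_Ico, Int.abs_eq_natAbs]
  omega

lemma fejer_identity (D : ℕ) (z : ℂ) (hz : z ≠ 0) :
    (∑ j ∈ Finset.range D, z ^ j) * (∑ k ∈ Finset.range D, z ^ (-(k:ℤ)))
    = ∑ d ∈ Finset.Icc (-(D:ℤ)) (D:ℤ), ((((D:ℤ) - |d|) : ℤ) : ℂ) * z ^ d := by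
  rw [Finset.sum_mul_sum]
  have step1 : ∀ j ∈ Finset.range D, ∀ k ∈ Finset.range D,
      z ^ j * z ^ (-(k:ℤ)) = z ^ ((j:ℤ) - k) := by
    intro j _ k _
    rw [← zpow_natCast z j, ← zpow_add₀ hz, sub_eq_add_neg]
  have hB : ∀ j ∈ Finset.range D, (∑ k ∈ Finset.range D, z ^ ((j:ℤ) - k))
      = ∑ d ∈ Finset.Icc (-(D:ℤ)) (D:ℤ),
          if 0 ≤ (j:ℤ) - d ∧ (j:ℤ) - d < D then z ^ d else 0 := by
    intro j hj
    simp only [Finset.mem_range] at hj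
    rw [← Finset.sum_filter]
    refine Finset.sum_nbij' (fun k => (j:ℤ) - k) (fun d => ((j:ℤ) - d).toNat) ?_ ?_ ?_ ?_ ?_
    · intro k hk
      simp only [Finset.mem_range] at hk
      simp only [Finset.mem_filter, Finset.mem_Icc]
      omega
    · intro d hd
      simp only [Finset.mem_filter, Finset.mem_Icc] at hd
      simp only [Finset.mem_range]
      omega
    · intro k hk; simp only [Finset.mem_range] at hk; omega
    · intro d hd; simp only [Finset.mem_filter, Finset.mem_Icc] at hd; omega
    · intro k hk; rfl
  calc ∑ j ∈ Finset.range D, ∑ k ∈ Finset.range D, z ^ j * z ^ (-(k:ℤ))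
      = ∑ j ∈ Finset.range D, ∑ k ∈ Finset.range D, z ^ ((j:ℤ) - k) := by
        refine Finset.sum_congr rfl fun j hj => Finset.sum_congr rfl fun k hk => ?_
        exact step1 j hj k hk
    _ = ∑ j ∈ Finset.range D, ∑ d ∈ Finset.Icc (-(D:ℤ)) (D:ℤ),
          if 0 ≤ (j:ℤ) - d ∧ (j:ℤ) - d < D then z ^ d else 0 :=
        Finset.sum_congr rfl hB
    _ = ∑ d ∈ Finset.Icc (-(D:ℤ)) (D:ℤ), ∑ j ∈ Finset.range D,
          if 0 ≤ (j:ℤ) - d ∧ (j:ℤ) - d < D then z ^ d else 0 := Finset.sum_comm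
    _ = ∑ d ∈ Finset.Icc (-(D:ℤ)) (D:ℤ), ((((D:ℤ) - |d|) : ℤ) : ℂ) * z ^ d := by
        refine Finset.sum_congr rfl fun d hd => ?_
        rw [← Finset.sum_filter, Finset.sum_const, nsmul_eq_mul, ← fejer_card D d hd]
        push_cast
        ring
lemma S_norm_ge (T : ℝ) (hT : 2 ≤ T) (D : ℕ) (hD1 : 1 ≤ D) (hDT : (D:ℝ) ≤ T / 2)
    (u : ℝ) (hu : |u| ≤ 1 / T) :
    2 * D / Real.pi ≤ ‖∑ j ∈ Finset.range D, (Complex.exp (2 * Real.pi * Complex.I * u)) ^ j‖ := by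
  have hT0 : (0:ℝ) < T := by linarith
  have hu2 : |u| ≤ 1 / 2 := hu.trans (by rw [div_le_div_iff₀ hT0 two_pos]; linarith)
  have hDu : (D:ℝ) * |u| ≤ 1 / 2 := by
    calc (D:ℝ) * |u| ≤ (T/2) * (1/T) := by
          apply mul_le_mul hDT hu (abs_nonneg u) (by linarith)
      _ = 1 / 2 := by field_simp
  rcases eq_or_ne u 0 with hu0 | hu0
  · subst hu0
    simp only [Complex.ofReal_zero, mul_zero, Complex.exp_zero, one_pow, Finset.sum_const,
      Finset.card_range, nsmul_eq_mul, mul_one]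
    rw [Complex.norm_natCast]
    rw [div_le_iff₀ Real.pi_pos]
    nlinarith [Real.pi_gt_three, (Nat.one_le_cast.mpr hD1 : (1:ℝ) ≤ D)]
  · set z := Complex.exp (2 * Real.pi * Complex.I * u) with hzdef
    have hz1 : z ≠ 1 := by
      intro h
      rw [hzdef, Complex.exp_eq_one_iff] at h
      obtain ⟨n, hn⟩ := h
      have h2 : (2 * Real.pi * Complex.I : ℂ) ≠ 0 := by
        simp [Real.pi_ne_zero, Complex.I_ne_zero]
      have heq : (2 * Real.pi * Complex.I : ℂ) * u = (2 * Real.pi * Complex.I) * n := by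
        rw [hn]; ring
      have : (u : ℂ) = (n : ℂ) := mul_left_cancel₀ h2 heq
      have hun : u = (n : ℝ) := by exact_mod_cast this
      rcases eq_or_ne n 0 with h0 | h0
      · exact hu0 (by simp [hun, h0])
      · have : (1:ℝ) ≤ |u| := by
          rw [hun, ← Int.cast_abs]
          exact_mod_cast Int.one_le_abs h0
        linarith
    rw [geom_sum_eq hz1, norm_div]
    have hnum : ‖z ^ D - 1‖ = 2 * |Real.sin (Real.pi * ((D:ℝ) * u))| := by
      rw [hzdef, ← Complex.exp_nat_mul]
      have h3 : ((D:ℂ) * (2 * Real.pi * Complex.I * u)) = ((2 * Real.pi * ((D:ℝ) * u) : ℝ) : ℂ) * Complex.I := by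
        push_cast; ring
      rw [h3, norm_exp_mul_I_sub_one,
        show (2 * Real.pi * ((D:ℝ) * u) / 2 = Real.pi * ((D:ℝ) * u)) from by ring]
    have hden : ‖z - 1‖ = 2 * |Real.sin (Real.pi * u)| := by
      rw [hzdef]
      have h3 : ((2 : ℂ) * Real.pi * Complex.I * u) = ((2 * Real.pi * u : ℝ) : ℂ) * Complex.I := by
        push_cast; ring
      rw [h3, norm_exp_mul_I_sub_one,
        show (2 * Real.pi * u / 2 = Real.pi * u) from by ring]
    rw [hnum, hden]
    have hu0' : 0 < |u| := abs_pos.2 hu0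
    have habs : ∀ v : ℝ, |Real.sin (Real.pi * v)| = |Real.sin (Real.pi * |v|)| := by
      intro v
      rcases abs_cases v with ⟨h1, _⟩ | ⟨h1, _⟩
      · rw [h1]
      · rw [h1, mul_neg, Real.sin_neg, abs_neg]
    have hsin_nonneg : (0:ℝ) ≤ Real.sin (Real.pi * |u|) :=
      Real.sin_nonneg_of_nonneg_of_le_pi (by positivity) (by nlinarith [Real.pi_pos])
    have hden_le : |Real.sin (Real.pi * u)| ≤ Real.pi * |u| := by
      rw [habs u, _root_.abs_of_nonneg hsin_nonneg]
      exact Real.sin_le (by positivity)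
    have hden_pos : 0 < |Real.sin (Real.pi * u)| := by
      rw [habs u, _root_.abs_of_nonneg hsin_nonneg]
      apply Real.sin_pos_of_pos_of_lt_pi (by positivity)
      nlinarith [Real.pi_gt_three]
    have habs3 : |Real.pi * ((D:ℝ) * u)| = Real.pi * ((D:ℝ) * |u|) := by
      rw [abs_mul, abs_mul, _root_.abs_of_nonneg Real.pi_pos.le, Nat.abs_cast]
    have hx : |Real.pi * ((D:ℝ) * u)| ≤ Real.pi / 2 := by
      rw [habs3]; nlinarith [Real.pi_pos]
    have hjordan := Real.mul_abs_le_abs_sin hx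
    rw [habs3] at hjordan
    have hnum_ge : 2 * ((D:ℝ) * |u|) ≤ |Real.sin (Real.pi * ((D:ℝ) * u))| := by
      have hpi := Real.pi_pos
      calc 2 * ((D:ℝ) * |u|) = 2 / Real.pi * (Real.pi * ((D:ℝ) * |u|)) := by
            field_simp
        _ ≤ |Real.sin (Real.pi * ((D:ℝ) * u))| := hjordan
  
    rw [div_le_div_iff₀ Real.pi_pos (by positivity)]
    nlinarith [mul_le_mul_of_nonneg_left hden_le (show (0:ℝ) ≤ 2 * (2 * D) by positivity),
      mul_le_mul_of_nonneg_left hnum_ge (show (0:ℝ) ≤ 2 * Real.pi by positivity)]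

theorem stmt_13 (T : ℝ) (hT : 2 ≤ T) (D : ℕ) (hD : D = ⌊T / 2⌋₊) (θ : ℝ) :
    (if |θ - round θ| ≤ 1 / T then (1 : ℝ) else 0) ≤
      Real.pi ^ 2 / 4 *
        (∑ d ∈ Finset.Icc (-(D : ℤ)) (D : ℤ),
          (((D : ℂ) - (|d| : ℤ)) / (D : ℂ) ^ 2) *
            Complex.exp (2 * Real.pi * Complex.I * d * θ)).re := by
  have hT0 : (0:ℝ) < T := by linarith
  have hD1 : 1 ≤ D := by
    rw [hD]; exact Nat.le_floor (by push_cast; linarith)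
  have hDT : (D:ℝ) ≤ T / 2 := hD ▸ Nat.floor_le (by linarith)
  have hD0 : (0:ℝ) < (D:ℝ) := by exact_mod_cast hD1
  set u : ℝ := θ - round θ with hu_def
  set z := Complex.exp (2 * Real.pi * Complex.I * u) with hzdef
  have hz0 : z ≠ 0 := Complex.exp_ne_zero _
  have hround : Complex.exp (2 * Real.pi * Complex.I * θ) = z := by
    have h1 : Complex.exp (2 * Real.pi * Complex.I * θ)
        = z * Complex.exp ((round θ : ℤ) * (2 * Real.pi * Complex.I)) := by
      rw [hzdef, ← Complex.exp_add]
      congr 1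
      rw [hu_def]
      push_cast
      ring
    rw [h1, Complex.exp_int_mul_two_pi_mul_I, mul_one]
  set S := ∑ j ∈ Finset.range D, z ^ j with hS
  have habs1 : ‖z‖ = 1 := by
    rw [hzdef, show (2 * (Real.pi:ℂ) * Complex.I * u) = ((2 * Real.pi * u : ℝ) : ℂ) * Complex.I
      from by push_cast; ring, Complex.norm_exp_ofReal_mul_I]
  have hsum : (∑ d ∈ Finset.Icc (-(D : ℤ)) (D : ℤ),
          (((D : ℂ) - (|d| : ℤ)) / (D : ℂ) ^ 2) *
            Complex.exp (2 * Real.pi * Complex.I * d * θ))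
      = ((Complex.normSq S / (D:ℝ)^2 : ℝ) : ℂ) := by
    have hterm : ∀ d ∈ Finset.Icc (-(D:ℤ)) (D:ℤ),
        (((D : ℂ) - (|d| : ℤ)) / (D : ℂ) ^ 2) * Complex.exp (2 * Real.pi * Complex.I * d * θ)
        = (1/(D:ℂ)^2) * (((((D:ℤ) - |d|) : ℤ):ℂ) * z ^ d) := by
      intro d _
      have he : Complex.exp (2 * Real.pi * Complex.I * d * θ) = z ^ d := by
        rw [show (2 * (Real.pi:ℂ) * Complex.I * d * θ) = (d:ℂ) * (2 * Real.pi * Complex.I * θ)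
          from by push_cast; ring, Complex.exp_int_mul, hround]
      rw [he]
      push_cast
      ring
    rw [Finset.sum_congr rfl hterm, ← Finset.mul_sum, ← fejer_identity D z hz0]
    have hconj : (∑ k ∈ Finset.range D, z ^ (-(k:ℤ))) = (starRingEnd ℂ) S := by
      rw [hS, map_sum]
      refine Finset.sum_congr rfl fun k _ => ?_
      rw [map_pow, zpow_neg, zpow_natCast, ← inv_pow]
      congr 1
      rw [Complex.inv_def, Complex.normSq_eq_norm_sq, habs1]
      simp
    rw [hconj, Complex.mul_conj]
    have hD2 : ((D:ℂ))^2 ≠ 0 := by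
      have : (D:ℂ) ≠ 0 := by exact_mod_cast (by positivity : ((D:ℝ)) ≠ 0)
      exact pow_ne_zero 2 this
    push_cast
    field_simp
    rfl
  rw [hsum, Complex.ofReal_re]
  split_ifs with h
  · have habsS : 2 * D / Real.pi ≤ ‖S‖ := S_norm_ge T hT D hD1 hDT u h
    have hnsq : Complex.normSq S = ‖S‖^2 := (Complex.sq_norm S).symm
    have hpi := Real.pi_pos
    rw [show (Real.pi^2/4 * (Complex.normSq S / (D:ℝ)^2))
        = Real.pi^2 * Complex.normSq S / (4 * (D:ℝ)^2) from by ring,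
      le_div_iff₀ (by positivity)]
    have h1 : (2*(D:ℝ)/Real.pi)^2 * Real.pi^2 = 4*(D:ℝ)^2 := by field_simp; ring
    have h2 : (2*(D:ℝ)/Real.pi)^2 ≤ ‖S‖^2 :=
      pow_le_pow_left₀ (by positivity) habsS 2
    have h3 := mul_le_mul_of_nonneg_left h2 (sq_nonneg Real.pi)
    nlinarith [h1, h3, hnsq]
  · exact mul_nonneg (by positivity) (div_nonneg (Complex.normSq_nonneg S) (by positivity))
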